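/- arXiv:1310.0939 — 3 statements merged into one kernel-verified Lean document; each statement's English description precedes it below -/
import Mathlib

section
/- Let Y be a nonnegative random variable with S(z) := P[Y ≥ z] ≤ 4(1 - N((z - M - c)/√M)) for all z ≥ 0, where M, c > 0 and N is the standard normal CDF. Then for every R > M + c, E[Y·1_{Y ≥ R}] = R·S(R) + ∫_R^∞ S(z) dz ≤ 4(c + M)(1 - N((R-M-c)/√M)) + (4√M/√(2π)) exp(-(R-M-c)²/(2M)). -/
open MeasureTheory Real Set Filter Topology

/-- Standard normal cumulative distribution function. -/
noncomputable def stdNormalCDF (x : ℝ) : ℝ :=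
  ∫ t in Set.Iic x, (Real.sqrt (2 * Real.pi))⁻¹ * Real.exp (-t ^ 2 / 2)

noncomputable def gpdf (x : ℝ) : ℝ := (Real.sqrt (2 * Real.pi))⁻¹ * Real.exp (-x ^ 2 / 2)

lemma gpdf_nonneg (x : ℝ) : 0 ≤ gpdf x := by
  unfold gpdf; positivity

lemma gpdf_integrable : Integrable gpdf := by
  have h : Integrable (fun x : ℝ => (Real.sqrt (2 * Real.pi))⁻¹ * Real.exp (-(2⁻¹ : ℝ) * x ^ 2)) :=
    (integrable_exp_neg_mul_sq (by norm_num)).const_mul _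
  refine h.congr (Filter.Eventually.of_forall fun x => ?_)
  unfold gpdf; ring_nf

lemma gpdf_integral : ∫ x, gpdf x = 1 := by
  unfold gpdf
  rw [MeasureTheory.integral_const_mul]
  have h : ∀ x : ℝ, Real.exp (-x ^ 2 / 2) = Real.exp (-(2⁻¹ : ℝ) * x ^ 2) := fun x => by ring_nf
  simp_rw [h]
  rw [integral_gaussian]
  have h2 : Real.pi / 2⁻¹ = 2 * Real.pi := by ring
  rw [h2, inv_mul_cancel₀]
  positivity

lemma gpdf_continuous : Continuous gpdf := by
  unfold gpdf
  fun_prop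

lemma stdNormalCDF_eq (x : ℝ) : stdNormalCDF x = ∫ t in Set.Iic x, gpdf t := rfl

lemma stdNormalCDF_hasDerivAt (x : ℝ) : HasDerivAt stdNormalCDF (gpdf x) x := by
  have key : ∀ u : ℝ, stdNormalCDF u = stdNormalCDF 0 + ∫ t in (0:ℝ)..u, gpdf t := by
    intro u
    rw [← intervalIntegral.integral_Iic_sub_Iic (gpdf_integrable.integrableOn)
      (gpdf_integrable.integrableOn), ← stdNormalCDF_eq, ← stdNormalCDF_eq]
    ring
  have h : HasDerivAt (fun u : ℝ => stdNormalCDF 0 + ∫ t in (0:ℝ)..u, gpdf t) (gpdf x) x := by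
    refine HasDerivAt.const_add _ ?_
    exact intervalIntegral.integral_hasDerivAt_right
      (gpdf_integrable.intervalIntegrable)
      (gpdf_continuous.stronglyMeasurable.stronglyMeasurableAtFilter)
      gpdf_continuous.continuousAt
  exact h.congr_of_eventuallyEq (Filter.Eventually.of_forall key)

lemma stdNormalCDF_le_one (x : ℝ) : stdNormalCDF x ≤ 1 := by
  rw [stdNormalCDF_eq, ← gpdf_integral]
  exact setIntegral_le_integral gpdf_integrable
    (Filter.Eventually.of_forall gpdf_nonneg)

lemma one_sub_stdNormalCDF (x : ℝ) : 1 - stdNormalCDF x = ∫ t in Set.Ioi x, gpdf t := by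
  have h := integral_add_compl (measurableSet_Iic (a := x)) gpdf_integrable (f := gpdf)
  rw [compl_Iic] at h
  rw [stdNormalCDF_eq, ← gpdf_integral]
  linarith

lemma stdNormalCDF_tendsto_one : Tendsto stdNormalCDF atTop (𝓝 1) := by
  rw [← gpdf_integral]
  have := (MeasureTheory.aecover_Iic (tendsto_id (α := ℝ))).integral_tendsto_of_countably_generated
    gpdf_integrable
  exact this

lemma gpdf_hasDerivAt (x : ℝ) : HasDerivAt gpdf (-x * gpdf x) x := by
  have h1 : HasDerivAt (fun x : ℝ => -x ^ 2 / 2) (-x) x := by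
    have := ((hasDerivAt_pow 2 x).neg.div_const 2)
    exact this.congr_deriv (by simp; ring)
  have h2 := (h1.exp.const_mul ((Real.sqrt (2 * Real.pi))⁻¹))
  exact h2.congr_deriv (by unfold gpdf; ring)

lemma gpdf_tendsto_zero : Tendsto gpdf atTop (𝓝 0) := by
  have h1 : Tendsto (fun x : ℝ => -x ^ 2 / 2) atTop atBot := by
    have : Tendsto (fun x : ℝ => x ^ 2 / 2) atTop atTop :=
      (tendsto_pow_atTop two_ne_zero).atTop_div_const (by norm_num)
    simpa [neg_div, Function.comp_def] using tendsto_neg_atTop_atBot.comp this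
  have h2 : Tendsto (fun x : ℝ => Real.exp (-x ^ 2 / 2)) atTop (𝓝 0) :=
    Real.tendsto_exp_atBot.comp h1
  have h3 := h2.const_mul ((Real.sqrt (2 * Real.pi))⁻¹)
  rw [mul_zero] at h3
  exact h3
lemma integral_mul_gpdf_Ioi {x : ℝ} (hx : 0 < x) :
    (∫ t in Set.Ioi x, t * gpdf t) = gpdf x ∧ IntegrableOn (fun t => t * gpdf t) (Set.Ioi x) := by
  have hderiv : ∀ t ∈ Set.Ici x, HasDerivAt (fun t : ℝ => -gpdf t) (t * gpdf t) t := by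
    intro t _
    have := (gpdf_hasDerivAt t).neg
    exact this.congr_deriv (by ring)
  have hpos : ∀ t ∈ Set.Ioi x, 0 ≤ t * gpdf t := fun t ht =>
    mul_nonneg (le_of_lt (hx.trans ht)) (gpdf_nonneg t)
  have htend : Tendsto (fun t : ℝ => -gpdf t) atTop (𝓝 0) := by
    simpa using gpdf_tendsto_zero.neg
  constructor
  · have := integral_Ioi_of_hasDerivAt_of_nonneg' hderiv hpos htend
    simpa using this
  · exact integrableOn_Ioi_deriv_of_nonneg' hderiv hpos htend

lemma mills (x : ℝ) (hx : 0 < x) : x * (1 - stdNormalCDF x) ≤ gpdf x := by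
  obtain ⟨hval, hint⟩ := integral_mul_gpdf_Ioi hx
  rw [one_sub_stdNormalCDF, ← MeasureTheory.integral_const_mul]
  rw [← hval]
  refine setIntegral_mono_on ?_ hint measurableSet_Ioi ?_
  · exact (gpdf_integrable.integrableOn).const_mul x
  · intro t ht
    exact mul_le_mul_of_nonneg_right (le_of_lt ht) (gpdf_nonneg t)

lemma gauss_tail_integral {a s R : ℝ} (hs : 0 < s) (hR : a < R) :
    IntegrableOn (fun z => 1 - stdNormalCDF ((z - a) / s)) (Set.Ioi R) ∧
    (∫ z in Set.Ioi R, (1 - stdNormalCDF ((z - a) / s))) =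
      (a - R) * (1 - stdNormalCDF ((R - a) / s)) + s * gpdf ((R - a) / s) := by
  set F : ℝ → ℝ := fun z => 1 - stdNormalCDF ((z - a) / s) with hF
  set G : ℝ → ℝ := fun z => (z - a) * F z - s * gpdf ((z - a) / s) with hG
  have hinner : ∀ z : ℝ, HasDerivAt (fun z : ℝ => (z - a) / s) (1 / s) z := fun z => by
    simpa using (((hasDerivAt_id z).sub_const a).div_const s)
  have hderiv : ∀ z ∈ Set.Ici R, HasDerivAt G (F z) z := by
    intro z _
    have hN : HasDerivAt (fun z : ℝ => stdNormalCDF ((z - a) / s))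
        (gpdf ((z - a) / s) * (1 / s)) z :=
      (stdNormalCDF_hasDerivAt ((z - a) / s)).comp (h := fun z => (z - a) / s) z (hinner z)
    have hF' : HasDerivAt F (-(gpdf ((z - a) / s) * (1 / s))) z := hN.const_sub 1
    have h1 : HasDerivAt (fun z : ℝ => (z - a) * F z)
        (1 * F z + (z - a) * -(gpdf ((z - a) / s) * (1 / s))) z :=
      ((hasDerivAt_id z).sub_const a).mul hF'
    have h2 : HasDerivAt (fun z : ℝ => s * gpdf ((z - a) / s))
        (s * ((-((z - a) / s) * gpdf ((z - a) / s)) * (1 / s))) z :=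
      ((gpdf_hasDerivAt ((z - a) / s)).comp (h := fun z => (z - a) / s) z (hinner z)).const_mul s
    have := h1.sub h2
    refine this.congr_deriv ?_
    have hs' : s ≠ 0 := ne_of_gt hs
    field_simp [hF]
    ring
  have hpos : ∀ z ∈ Set.Ioi R, 0 ≤ F z := fun z _ => by
    simp only [hF, sub_nonneg]
    exact stdNormalCDF_le_one _
  have hxz : Tendsto (fun z : ℝ => (z - a) / s) atTop atTop := by
    apply Tendsto.atTop_div_const hs
    simpa [sub_eq_add_neg] using tendsto_atTop_add_const_right atTop (-a) tendsto_id
  have htend2 : Tendsto (fun z : ℝ => s * gpdf ((z - a) / s)) atTop (𝓝 0) := by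
    have := (gpdf_tendsto_zero.comp hxz).const_mul s
    simpa [Function.comp_def] using this
  have htend1 : Tendsto (fun z : ℝ => (z - a) * F z) atTop (𝓝 0) := by
    apply tendsto_of_tendsto_of_tendsto_of_le_of_le' tendsto_const_nhds htend2
    · filter_upwards [eventually_ge_atTop a] with z hz
      exact mul_nonneg (by linarith) (by simpa [hF, sub_nonneg] using stdNormalCDF_le_one _)
    · filter_upwards [eventually_gt_atTop a] with z hz
      have hx : 0 < (z - a) / s := div_pos (by linarith) hs
      have := mills _ hx
      have h3 : (z - a) * F z = s * (((z - a) / s) * (1 - stdNormalCDF ((z - a) / s))) := by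
        field_simp
        rfl
      rw [h3]
      exact mul_le_mul_of_nonneg_left this (le_of_lt hs)
  have htendG : Tendsto G atTop (𝓝 0) := by
    have := htend1.sub htend2
    simpa using this
  constructor
  · exact integrableOn_Ioi_deriv_of_nonneg' hderiv hpos htendG
  · have := integral_Ioi_of_hasDerivAt_of_nonneg' hderiv hpos htendG
    rw [this]
    simp only [hG, hF]
    ring
/-- Tail expectation bound: if a nonnegative random variable `Y` has survival function
`S(z) = P[Y ≥ z]` dominated by a Gaussian-type tail `4(1 - N((z - M - c)/√M))`, then for every
`R > M + c`,
`E[Y 1_{Y ≥ R}] = R S(R) + ∫_R^∞ S(z) dz ≤ 4(c+M)(1 - N((R-M-c)/√M)) + (4√M/√(2π)) e^{-(R-M-c)²/(2M)}`. -/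
theorem tail_expectation_bound
    {Ω : Type*} [MeasurableSpace Ω] (μ : Measure Ω) [IsProbabilityMeasure μ]
    (Y : Ω → ℝ) (hYmeas : Measurable Y) (hYnonneg : ∀ ω, 0 ≤ Y ω)
    (hYint : Integrable Y μ)
    (M c R : ℝ) (hM : 0 < M) (hc : 0 < c) (hR : M + c < R)
    (S : ℝ → ℝ) (hS : ∀ z, S z = (μ {ω | z ≤ Y ω}).toReal)
    (htail : ∀ z : ℝ, 0 ≤ z →
      S z ≤ 4 * (1 - stdNormalCDF ((z - M - c) / Real.sqrt M))) :
    ((∫ ω, Set.indicator {ω | R ≤ Y ω} Y ω ∂μ) = R * S R + (∫ z in Set.Ioi R, S z)) ∧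
      R * S R + (∫ z in Set.Ioi R, S z) ≤
        4 * (c + M) * (1 - stdNormalCDF ((R - M - c) / Real.sqrt M)) +
          4 * Real.sqrt M / Real.sqrt (2 * Real.pi) *
            Real.exp (-(R - M - c) ^ 2 / (2 * M)) := by
  have hR0 : (0:ℝ) < R := lt_trans (by linarith) hR
  have hs : (0:ℝ) < Real.sqrt M := Real.sqrt_pos.mpr hM
  set a : ℝ := M + c with ha
  have hsub : ∀ z : ℝ, z - M - c = z - a := fun z => by rw [ha]; ring
  set F : ℝ → ℝ := fun z => 1 - stdNormalCDF ((z - a) / Real.sqrt M) with hF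
  obtain ⟨hFint, hFval⟩ := gauss_tail_integral (a := a) (s := Real.sqrt M) hs hR
  -- basic facts about S
  have hSnn : ∀ z, 0 ≤ S z := fun z => by rw [hS]; exact ENNReal.toReal_nonneg
  have hSle : ∀ z, 0 ≤ z → S z ≤ 4 * F z := by
    intro z hz
    have := htail z hz
    rwa [hsub z] at this
  have hSanti : Antitone S := by
    intro z₁ z₂ h
    rw [hS, hS]
    refine ENNReal.toReal_le_toReal (measure_ne_top μ _) (measure_ne_top μ _) |>.mpr ?_
    exact measure_mono (fun ω hω => le_trans h hω)
  have hSmeas : Measurable S := hSanti.measurable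
  have hSintOn : IntegrableOn S (Set.Ioi R) := by
    refine Integrable.mono' (hFint.const_mul 4) (hSmeas.aestronglyMeasurable) ?_
    rw [ae_restrict_iff' measurableSet_Ioi]
    filter_upwards with z hz
    rw [Real.norm_of_nonneg (hSnn z)]
    exact hSle z (le_of_lt (hR0.trans hz))
  -- Part 1: layer cake
  have hA : MeasurableSet {ω | R ≤ Y ω} := hYmeas measurableSet_Ici
  set g : Ω → ℝ := Set.indicator {ω | R ≤ Y ω} Y with hg
  have hgint : Integrable g μ := hYint.indicator hA
  have hgnn : 0 ≤ᵐ[μ] g := Filter.Eventually.of_forall fun ω =>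
    Set.indicator_nonneg (fun ω _ => hYnonneg ω) ω
  have eq1 : (∫ ω, g ω ∂μ) = ∫ t in Set.Ioi (0:ℝ), ((μ {ω | t ≤ g ω}).toReal) :=
    hgint.integral_eq_integral_meas_le hgnn
  set h : ℝ → ℝ := fun t => (μ {ω | t ≤ g ω}).toReal with hh
  have claim1 : ∀ t ∈ Set.Ioc (0:ℝ) R, h t = S R := by
    intro t ht
    have hset : {ω | t ≤ g ω} = {ω | R ≤ Y ω} := by
      ext ω
      simp only [Set.mem_setOf_eq]
      constructor
      · intro htg
        by_contra hRY
        have hmem : ω ∉ {ω | R ≤ Y ω} := hRY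
        have hzero : g ω = 0 := by rw [hg]; exact Set.indicator_of_notMem hmem Y
        rw [hzero] at htg
        exact absurd htg (not_le.mpr ht.1)
      · intro hRY
        have hmem : ω ∈ {ω | R ≤ Y ω} := hRY
        have heq : g ω = Y ω := by rw [hg]; exact Set.indicator_of_mem hmem Y
        rw [heq]
        exact le_trans ht.2 hRY
    show (μ {ω | t ≤ g ω}).toReal = S R
    rw [hset, hS]
  have claim2 : ∀ t ∈ Set.Ioi R, h t = S t := by
    intro t ht
    have hset : {ω | t ≤ g ω} = {ω | t ≤ Y ω} := by
      ext ω
      simp only [Set.mem_setOf_eq]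
      constructor
      · intro htg
        by_cases hRY : R ≤ Y ω
        · have hmem : ω ∈ {ω | R ≤ Y ω} := hRY
          rwa [hg, Set.indicator_of_mem hmem Y] at htg
        · have hmem : ω ∉ {ω | R ≤ Y ω} := hRY
          rw [hg, Set.indicator_of_notMem hmem Y] at htg
          exact absurd htg (not_le.mpr (hR0.trans ht))
      · intro htY
        have hmem : ω ∈ {ω | R ≤ Y ω} := le_trans (le_of_lt ht) htY
        rw [hg, Set.indicator_of_mem hmem Y]
        exact htY
    show (μ {ω | t ≤ g ω}).toReal = S t
    rw [hset, hS]
  have hint1 : IntegrableOn h (Set.Ioc 0 R) := by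
    refine IntegrableOn.congr_fun ?_ (fun t ht => (claim1 t ht).symm) measurableSet_Ioc
    exact integrableOn_const measure_Ioc_lt_top.ne
  have hint2 : IntegrableOn h (Set.Ioi R) := by
    refine IntegrableOn.congr_fun ?_ (fun t ht => (claim2 t ht).symm) measurableSet_Ioi
    exact hSintOn
  have hsplit : Set.Ioi (0:ℝ) = Set.Ioc 0 R ∪ Set.Ioi R := (Set.Ioc_union_Ioi_eq_Ioi hR0.le).symm
  have eq2 : (∫ t in Set.Ioi (0:ℝ), h t) = (∫ t in Set.Ioc (0:ℝ) R, h t) + ∫ t in Set.Ioi R, h t := by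
    rw [hsplit]
    exact setIntegral_union (Set.Ioc_disjoint_Ioi le_rfl) measurableSet_Ioi hint1 hint2
  have eq3 : (∫ t in Set.Ioc (0:ℝ) R, h t) = R * S R := by
    rw [setIntegral_congr_fun measurableSet_Ioc claim1]
    simp [Real.volume_Ioc, ENNReal.toReal_ofReal hR0.le, smul_eq_mul, hR0.le]
  have eq4 : (∫ t in Set.Ioi R, h t) = ∫ z in Set.Ioi R, S z :=
    setIntegral_congr_fun measurableSet_Ioi claim2
  have part1 : (∫ ω, g ω ∂μ) = R * S R + ∫ z in Set.Ioi R, S z := by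
    rw [eq1, eq2, eq3, eq4]
  refine ⟨part1, ?_⟩
  -- Part 2
  have step1 : R * S R ≤ R * (4 * F R) :=
    mul_le_mul_of_nonneg_left (hSle R hR0.le) hR0.le
  have step2 : (∫ z in Set.Ioi R, S z) ≤ ∫ z in Set.Ioi R, 4 * F z := by
    refine setIntegral_mono_on hSintOn (hFint.const_mul 4) measurableSet_Ioi ?_
    intro z hz
    exact hSle z (le_of_lt (hR0.trans hz))
  have eq5 : (∫ z in Set.Ioi R, 4 * F z) = 4 * ((a - R) * F R + Real.sqrt M * gpdf ((R - a) / Real.sqrt M)) := by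
    rw [MeasureTheory.integral_const_mul, hFval]
  have hexp : gpdf ((R - a) / Real.sqrt M) =
      (Real.sqrt (2 * Real.pi))⁻¹ * Real.exp (-(R - M - c) ^ 2 / (2 * M)) := by
    unfold gpdf
    have harg : -((R - a) / Real.sqrt M) ^ 2 / 2 = -(R - M - c) ^ 2 / (2 * M) := by
      rw [div_pow, Real.sq_sqrt hM.le, hsub R]
      ring
    rw [harg]
  have final : R * (4 * F R) + (∫ z in Set.Ioi R, 4 * F z) =
      4 * (c + M) * (1 - stdNormalCDF ((R - M - c) / Real.sqrt M)) +
        4 * Real.sqrt M / Real.sqrt (2 * Real.pi) *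
          Real.exp (-(R - M - c) ^ 2 / (2 * M)) := by
    rw [eq5, hexp, hsub R, hF, ha]
    field_simp
    ring
  calc R * S R + (∫ z in Set.Ioi R, S z)
      ≤ R * (4 * F R) + ∫ z in Set.Ioi R, 4 * F z := add_le_add step1 step2
    _ = _ := final
end

section
/- Let f : E × F → ℝ ∪ {∞} be measurable with respect to the product Borel σ-field of Polish spaces E, F, let A ⊆ E × F be a measurable set whose projection to E is all of E, and let μ be a Borel probability measure on E. Define g(x) := inf{ f(x,y) : (x,y) ∈ A }. Then g is measurable with respect to the μ-completion of the Borel σ-field on E, and for every ε > 0 there exists a μ-completed-measurable map Y_ε : E → F such that for μ-a.e. x, (x, Y_ε(x)) ∈ A and f(x, Y_ε(x)) ≤ (g(x) + ε)·1_{g(x) > -∞} - (1/ε)·1_{g(x) = -∞}. -/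
open MeasureTheory Set
open scoped ENNReal

namespace EpsOpt

/-- Cylinder in Baire space: sequences agreeing with `t` on the first `n` coordinates. -/
def cyl (n : ℕ) (t : ℕ → ℕ) : Set (ℕ → ℕ) := {σ | ∀ i, i < n → σ i = t i}

lemma isClosed_cyl (n : ℕ) (t : ℕ → ℕ) : IsClosed (cyl n t) := by
  have : cyl n t = ⋂ i ∈ Iio n, {σ : ℕ → ℕ | σ i = t i} := by
    ext σ; simp [cyl]
  rw [this]
  exact isClosed_biInter (fun i _ => isClosed_eq (continuous_apply i) continuous_const)

theorem exists_measurable_selection_on_compact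
    {E : Type*} [TopologicalSpace E] [PolishSpace E] [MeasurableSpace E] [BorelSpace E]
    (π : (ℕ → ℕ) → E) (hπ : Continuous π) (K : Set (ℕ → ℕ)) (hK : IsCompact K) :
    ∃ s : E → (ℕ → ℕ), Measurable s ∧ ∀ x ∈ π '' K, s x ∈ K ∧ π (s x) = x := by
  letI := TopologicalSpace.upgradeIsCompletelyMetrizable E
  classical
  -- the greedy decreasing family of compacts
  set T : E → ℕ → Set (ℕ → ℕ) := fun x n =>
    Nat.rec (K ∩ π ⁻¹' {x}) (fun i Ti => {σ ∈ Ti | σ i = sInf ((fun σ : ℕ → ℕ => σ i) '' Ti)}) n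
    with hT
  set sel : E → (ℕ → ℕ) := fun x i => sInf ((fun σ : ℕ → ℕ => σ i) '' T x i) with hsel
  have hT0 : ∀ x, T x 0 = K ∩ π ⁻¹' {x} := fun _ => rfl
  have hTs : ∀ x n, T x (n + 1) = {σ ∈ T x n | σ n = sel x n} := fun _ _ => rfl
  have h_mono : ∀ x n, T x (n + 1) ⊆ T x n := fun x n σ hσ => hσ.1
  have h_sub : ∀ x n, T x n ⊆ K ∩ π ⁻¹' {x} := by
    intro x n
    induction n with
    | zero => exact subset_rfl
    | succ n ih => exact (h_mono x n).trans ih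
  have h_closed : ∀ x n, IsClosed (T x n) := by
    intro x n
    induction n with
    | zero => exact (hK.isClosed).inter (isClosed_singleton.preimage hπ)
    | succ n ih =>
        rw [hTs]
        exact ih.inter (isClosed_eq (continuous_apply n) continuous_const)
  -- prefix property
  have h_prefix : ∀ x n σ, σ ∈ T x n → ∀ i, i < n → σ i = sel x i := by
    intro x n
    induction n with
    | zero => intro σ _ i hi; omega
    | succ n ih =>
        intro σ hσ i hi
        rcases Nat.lt_succ_iff_lt_or_eq.1 hi with h | h
        · exact ih σ (h_mono x n hσ) i h
        · subst h; exact hσ.2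
  -- nonemptiness on the image
  have h_ne : ∀ x, x ∈ π '' K → ∀ n, (T x n).Nonempty := by
    intro x hx n
    induction n with
    | zero =>
        rcases hx with ⟨σ, hσK, hσx⟩
        exact ⟨σ, hσK, hσx⟩
    | succ n ih =>
        rcases ih with ⟨σ, hσ⟩
        have hne : ((fun σ : ℕ → ℕ => σ n) '' T x n).Nonempty := ⟨σ n, σ, hσ, rfl⟩
        rcases Nat.sInf_mem hne with ⟨σ', hσ', hσ'n⟩
        exact ⟨σ', hσ', hσ'n⟩
  -- characterization of T
  have h_eq : ∀ x n, T x n = K ∩ π ⁻¹' {x} ∩ cyl n (sel x) := by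
    intro x n
    induction n with
    | zero =>
        rw [hT0]
        ext σ; simp [cyl]
    | succ n ih =>
        rw [hTs, ih]
        ext σ
        simp only [mem_setOf_eq, mem_inter_iff, cyl]
        constructor
        · rintro ⟨⟨hσ, hcyl⟩, hn⟩
          refine ⟨hσ, fun i hi => ?_⟩
          rcases Nat.lt_succ_iff_lt_or_eq.1 hi with h | h
          · exact hcyl i h
          · subst h; exact hn
        · rintro ⟨hσ, hcyl⟩
          exact ⟨⟨hσ, fun i hi => hcyl i (hi.trans n.lt_succ_self)⟩, hcyl n n.lt_succ_self⟩
  -- the selection works on π '' K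
  have h_works : ∀ x ∈ π '' K, sel x ∈ K ∧ π (sel x) = x := by
    intro x hx
    have hcpt : IsCompact (T x 0) := hK.inter_right (isClosed_singleton.preimage hπ)
    obtain ⟨σ, hσ⟩ := IsCompact.nonempty_iInter_of_sequence_nonempty_isCompact_isClosed
      (T x) (h_mono x) (h_ne x hx) hcpt (h_closed x)
    have hmem : ∀ n, σ ∈ T x n := by
      intro n
      exact mem_iInter.1 hσ n
    have hσsel : σ = sel x := by
      funext n
      exact (hmem (n + 1)).2
    have h0 := hmem 0
    rw [hT0] at h0
    rw [← hσsel]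
    exact ⟨h0.1, h0.2⟩
  -- measurable building blocks
  set Ac : ℕ → (ℕ → ℕ) → Set E := fun n t => π '' (K ∩ cyl n t) with hAc
  have hAc_meas : ∀ n t, MeasurableSet (Ac n t) :=
    fun n t => (((hK.inter_right (isClosed_cyl n t)).image hπ).isClosed).measurableSet
  have hAc_sub : ∀ n t, Ac n t ⊆ π '' K := fun n t => image_mono inter_subset_left
  have hAc_mem : ∀ n t x, x ∈ Ac n t ↔ ∃ σ, σ ∈ K ∧ π σ = x ∧ ∀ i, i < n → σ i = t i := by
    intro n t x
    constructor
    · rintro ⟨σ, ⟨hσK, hσc⟩, rfl⟩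
      exact ⟨σ, hσK, rfl, hσc⟩
    · rintro ⟨σ, hσK, rfl, hσc⟩
      exact ⟨σ, ⟨hσK, hσc⟩, rfl⟩
  -- key characterization of prefixes of `sel`
  have h_char : ∀ n (t : ℕ → ℕ) x, (∀ i, i < n → sel x i = t i) ↔
      ((x ∈ Ac n t ∧ ∀ i, i < n → ∀ k, k < t i → x ∉ Ac (i + 1) (Function.update t i k)) ∨
        (x ∉ π '' K ∧ ∀ i, i < n → t i = 0)) := by
    intro n t x
    by_cases hx : x ∈ π '' K
    · -- main case
      constructor
      · intro hpre
        left
        obtain ⟨σ, hσ⟩ := h_ne x hx n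
        obtain ⟨⟨hσK, hσx⟩, _⟩ := (h_eq x n ▸ hσ : σ ∈ K ∩ π ⁻¹' {x} ∩ cyl n (sel x))
        have hσc : σ ∈ cyl n (sel x) := (h_eq x n ▸ hσ : σ ∈ _ ∩ cyl n (sel x)).2
        constructor
        · refine (hAc_mem n t x).2 ⟨σ, hσK, hσx, fun i hi => ?_⟩
          rw [hσc i hi, hpre i hi]
        · intro i hi k hk hmem
          obtain ⟨σ', hσ'K, hσ'x, hσ'c⟩ := (hAc_mem (i + 1) (Function.update t i k) x).1 hmem
          have hσ'Ti : σ' ∈ T x i := by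
            rw [h_eq]
            refine ⟨⟨hσ'K, hσ'x⟩, fun j hj => ?_⟩
            have := hσ'c j (hj.trans i.lt_succ_self)
            rw [Function.update_of_ne hj.ne] at this
            rw [this, hpre j (hj.trans hi)]
          have : sel x i ≤ k := by
            have hki : σ' i = k := by
              have := hσ'c i i.lt_succ_self
              rwa [Function.update_self] at this
            exact hki ▸ Nat.sInf_le ⟨σ', hσ'Ti, rfl⟩
          have hti : sel x i = t i := hpre i hi
          omega
      · rintro (⟨hmem, hmin⟩ | ⟨hnx, _⟩)
        · -- greedy recovers t
          obtain ⟨σ, hσK, hσx, hσc⟩ := (hAc_mem n t x).1 hmem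
          intro i hi
          induction i using Nat.strong_induction_on with
          | _ i IH =>
            have hσTi : σ ∈ T x i := by
              rw [h_eq]
              exact ⟨⟨hσK, hσx⟩, fun j hj => by rw [hσc j (hj.trans hi), IH j hj (hj.trans hi)]⟩
            have hle : sel x i ≤ t i := by
              have : σ i = t i := hσc i hi
              exact this ▸ Nat.sInf_le ⟨σ, hσTi, rfl⟩
            rcases lt_or_eq_of_le hle with hlt | heq
            · exfalso
              have hne' : ((fun σ : ℕ → ℕ => σ i) '' T x i).Nonempty := ⟨σ i, σ, hσTi, rfl⟩
              obtain ⟨σ', hσ'Ti, hσ'i⟩ := Nat.sInf_mem hne'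
              have hσ'K : σ' ∈ K := (h_sub x i hσ'Ti).1
              have hσ'x : π σ' = x := (h_sub x i hσ'Ti).2
              refine hmin i hi (sel x i) hlt ((hAc_mem _ _ x).2 ⟨σ', hσ'K, hσ'x, ?_⟩)
              intro j hj
              rcases Nat.lt_succ_iff_lt_or_eq.1 hj with h | h
              · rw [Function.update_of_ne h.ne]
                rw [h_prefix x i σ' hσ'Ti j h, IH j h (h.trans hi)]
              · subst h
                rw [Function.update_self]
                exact hσ'i
            · exact heq
        · exact absurd hx hnx
    · -- x outside the image : sel x = 0
      have hTempty : ∀ m, T x m = ∅ := by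
        intro m
        rcases (T x m).eq_empty_or_nonempty with h | h
        · exact h
        · exfalso
          obtain ⟨σ, hσ⟩ := h
          exact hx ⟨σ, (h_sub x m hσ).1, (h_sub x m hσ).2⟩
      have hsel0 : ∀ i, sel x i = 0 := by
        intro i
        show sInf ((fun σ : ℕ → ℕ => σ i) '' T x i) = 0
        rw [hTempty i, image_empty, Nat.sInf_empty]
      constructor
      · intro hpre
        right
        exact ⟨hx, fun i hi => by rw [← hpre i hi, hsel0 i]⟩
      · rintro (⟨hmem, _⟩ | ⟨_, ht0⟩)
        · exact absurd (hAc_sub n t hmem) hx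
        · intro i hi
          rw [hsel0 i, ht0 i hi]
  -- measurability of sel
  have h_pre_meas : ∀ n (t : ℕ → ℕ), MeasurableSet {x | ∀ i, i < n → sel x i = t i} := by
    intro n t
    have himgK : MeasurableSet (π '' K) := ((hK.image hπ).isClosed).measurableSet
    by_cases h0 : ∀ i, i < n → t i = 0
    · have : {x | ∀ i, i < n → sel x i = t i} =
          (Ac n t ∩ ⋂ i ∈ Iio n, ⋂ k ∈ Iio (t i), (Ac (i + 1) (Function.update t i k))ᶜ)
            ∪ (π '' K)ᶜ := by
        ext x
        rw [mem_setOf_eq, h_char n t x]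
        simp only [mem_union, mem_inter_iff, mem_iInter, mem_Iio, mem_compl_iff]
        constructor
        · rintro (⟨h1, h2⟩ | ⟨h1, _⟩)
          · exact Or.inl ⟨h1, fun i hi k hk => h2 i hi k hk⟩
          · exact Or.inr h1
        · rintro (⟨h1, h2⟩ | h1)
          · exact Or.inl ⟨h1, fun i hi k hk => h2 i hi k hk⟩
          · exact Or.inr ⟨h1, h0⟩
      rw [this]
      exact ((hAc_meas n t).inter (MeasurableSet.biInter (to_countable _)
        (fun i _ => MeasurableSet.biInter (to_countable _)
          (fun k _ => (hAc_meas _ _).compl)))).union himgK.compl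
    · have : {x | ∀ i, i < n → sel x i = t i} =
          Ac n t ∩ ⋂ i ∈ Iio n, ⋂ k ∈ Iio (t i), (Ac (i + 1) (Function.update t i k))ᶜ := by
        ext x
        rw [mem_setOf_eq, h_char n t x]
        simp only [mem_inter_iff, mem_iInter, mem_Iio, mem_compl_iff]
        constructor
        · rintro (⟨h1, h2⟩ | ⟨_, h1⟩)
          · exact ⟨h1, fun i hi k hk => h2 i hi k hk⟩
          · exact absurd h1 h0
        · rintro ⟨h1, h2⟩
          exact Or.inl ⟨h1, fun i hi k hk => h2 i hi k hk⟩
      rw [this]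
      exact (hAc_meas n t).inter (MeasurableSet.biInter (to_countable _)
        (fun i _ => MeasurableSet.biInter (to_countable _)
          (fun k _ => (hAc_meas _ _).compl)))
  have h_meas : Measurable sel := by
    apply measurable_pi_lambda
    intro i
    apply measurable_to_countable'
    intro k
    have : (fun x => sel x i) ⁻¹' {k} =
        ⋃ (u : Fin i → ℕ), {x | ∀ j, j < i + 1 →
          sel x j = (fun j' => if h : j' < i then u ⟨j', h⟩ else k) j} := by
      ext x
      simp only [mem_preimage, mem_singleton_iff, mem_iUnion, mem_setOf_eq]
      constructor
      · intro hk
        refine ⟨fun j => sel x j, fun j hj => ?_⟩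
        by_cases h : j < i
        · simp [h]
        · have : j = i := by omega
          subst this
          simp [hk]
      · rintro ⟨u, hu⟩
        have := hu i i.lt_succ_self
        simpa using this
    rw [this]
    exact MeasurableSet.iUnion (fun u => h_pre_meas (i + 1) _)
  exact ⟨sel, h_meas, h_works⟩


-- cylinders are a neighborhood basis
lemma cyl_nhds_basis {U : Set (ℕ → ℕ)} (hU : IsOpen U) {σ : ℕ → ℕ} (hσ : σ ∈ U) :
    ∃ n, cyl n σ ⊆ U := by
  obtain ⟨I, u, hu, hIu⟩ := isOpen_pi_iff.1 hU σ hσ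
  rcases I.eq_empty_or_nonempty with rfl | hI
  · exact ⟨0, fun τ _ => hIu (by simp)⟩
  · refine ⟨(I.max' hI) + 1, fun τ hτ => hIu ?_⟩
    intro a ha
    rw [hτ a (Nat.lt_succ_of_le (I.le_max' a ha))]
    exact (hu a ha).2

theorem exists_compact_image_approx
    {E : Type*} [TopologicalSpace E] [PolishSpace E] [MeasurableSpace E] [BorelSpace E]
    (π : (ℕ → ℕ) → E) (hπ : Continuous π)
    (μ : Measure E) [IsFiniteMeasure μ] {δ : ℝ≥0∞} (hδ : 0 < δ) :
    ∃ K : Set (ℕ → ℕ), IsCompact K ∧ μ (range π) ≤ μ (π '' K) + δ := by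
  letI := TopologicalSpace.upgradeIsCompletelyMetrizable E
  classical
  obtain ⟨η, hηpos, hηsum⟩ := ENNReal.exists_pos_sum_of_countable hδ.ne' ℕ
  -- one-step choice
  have key : ∀ (i : ℕ) (S : Set (ℕ → ℕ)),
      ∃ k : ℕ, μ (π '' S) ≤ μ (π '' (S ∩ {σ | σ i ≤ k})) + η i := by
    intro i S
    have hUnion : (⋃ k : ℕ, (S ∩ {σ | σ i ≤ k})) = S := by
      ext σ
      simp only [mem_iUnion, mem_inter_iff, mem_setOf_eq]
      exact ⟨fun ⟨k, h, _⟩ => h, fun h => ⟨σ i, h, le_rfl⟩⟩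
    have hmono : Monotone (fun k : ℕ => S ∩ {σ | σ i ≤ k}) := by
      intro a b hab σ ⟨h1, h2⟩
      exact ⟨h1, h2.trans hab⟩
    have hsup : μ (π '' S) = ⨆ k : ℕ, μ (π '' (S ∩ {σ | σ i ≤ k})) := by
      conv_lhs => rw [← hUnion, image_iUnion]
      exact Monotone.measure_iUnion (fun a b hab => image_mono (hmono hab))
    by_cases hv0 : μ (π '' S) ≤ (η i : ℝ≥0∞)
    · exact ⟨0, hv0.trans (le_add_self)⟩
    · push_neg at hv0
      have hvne : μ (π '' S) ≠ ⊤ := (measure_lt_top μ _).ne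
      have hsub : μ (π '' S) - η i < μ (π '' S) :=
        ENNReal.sub_lt_self hvne ((lt_of_le_of_lt zero_le hv0).ne')
          (by exact_mod_cast (hηpos i).ne')
      obtain ⟨k, hk⟩ := lt_iSup_iff.1 (hsub.trans_eq hsup)
      exact ⟨k, tsub_le_iff_right.1 hk.le⟩
  choose M hM using key
  -- recursive construction of the sets D n
  set D : ℕ → Set (ℕ → ℕ) := fun n =>
    Nat.rec univ (fun i Di => Di ∩ {σ | σ i ≤ M i Di}) n with hD
  set m : ℕ → ℕ := fun n => M n (D n) with hm
  have hD0 : D 0 = univ := rfl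
  have hDs : ∀ n, D (n + 1) = D n ∩ {σ | σ n ≤ m n} := fun _ => rfl
  have hDchar : ∀ n, D n = {σ | ∀ i, i < n → σ i ≤ m i} := by
    intro n
    induction n with
    | zero => rw [hD0]; ext σ; simp
    | succ n ih =>
        rw [hDs, ih]
        ext σ
        simp only [mem_inter_iff, mem_setOf_eq]
        constructor
        · rintro ⟨h1, h2⟩ i hi
          rcases Nat.lt_succ_iff_lt_or_eq.1 hi with h | h
          · exact h1 i h
          · subst h; exact h2
        · intro h
          exact ⟨fun i hi => h i (hi.trans n.lt_succ_self), h n n.lt_succ_self⟩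
  have hDanti : ∀ j n, j ≤ n → D n ⊆ D j := by
    intro j n hjn
    rw [hDchar, hDchar]
    intro σ h i hi
    exact h i (hi.trans_le hjn)
  -- invariant
  have hinv : ∀ n, μ (range π) ≤ μ (π '' D n) + ∑ i ∈ Finset.range n, (η i : ℝ≥0∞) := by
    intro n
    induction n with
    | zero => simp [hD0, image_univ]
    | succ n ih =>
        refine ih.trans ?_
        have h1 := hM n (D n)
        rw [Finset.sum_range_succ]
        calc μ (π '' D n) + ∑ i ∈ Finset.range n, (η i : ℝ≥0∞)
            ≤ (μ (π '' (D n ∩ {σ | σ n ≤ M n (D n)})) + (η n : ℝ≥0∞))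
                + ∑ i ∈ Finset.range n, (η i : ℝ≥0∞) := add_le_add_left h1 _
          _ = μ (π '' D (n + 1)) + (∑ i ∈ Finset.range n, (η i : ℝ≥0∞) + (η n : ℝ≥0∞)) := by
                rw [hDs]; ring
  have hinv' : ∀ n, μ (range π) ≤ μ (π '' D n) + δ := by
    intro n
    refine (hinv n).trans (add_le_add_right ?_ _)
    exact le_trans (ENNReal.sum_le_tsum _) hηsum.le
  -- the compact set
  set K : Set (ℕ → ℕ) := {σ | ∀ i, σ i ≤ m i} with hKdef
  have hKcompact : IsCompact K := by
    have : K = Set.pi univ (fun i => Iic (m i)) := by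
      ext σ; simp [hKdef, Set.mem_pi]; rfl
    rw [this]
    exact isCompact_univ_pi (fun i => (Set.finite_Iic _).isCompact)
  refine ⟨K, hKcompact, ?_⟩
  -- closed approximations from outside
  set Kb : ℕ → Set E := fun n =>
    ⋃ (t ∈ {t : Fin n → ℕ | ∀ i, t i ≤ m (i : ℕ)}),
      closure (π '' cyl n (fun j => if h : j < n then t ⟨j, h⟩ else 0)) with hKb
  have hKbclosed : ∀ n, IsClosed (Kb n) := by
    intro n
    apply Set.Finite.isClosed_biUnion
    · have : {t : Fin n → ℕ | ∀ i, t i ≤ m (i : ℕ)} = Set.pi univ (fun i : Fin n => Iic (m (i : ℕ))) := by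
        ext t; simp [Set.mem_pi]; rfl
      rw [this]
      exact Set.Finite.pi (fun i => finite_Iic _)
    · exact fun t _ => isClosed_closure
  have hKbsub : ∀ n, π '' D n ⊆ Kb n := by
    intro n x hx
    obtain ⟨σ, hσ, rfl⟩ := hx
    rw [hDchar] at hσ
    refine mem_biUnion (show (fun i : Fin n => σ (i : ℕ)) ∈ _ from fun i => hσ i i.isLt) ?_
    apply subset_closure
    refine ⟨σ, ?_, rfl⟩
    intro i hi
    simp [hi]
  -- the limit closed set is contained in π '' K
  have hCsub : (⋂ n, Kb n) ⊆ π '' K := by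
    intro x hx
    have hex : ∀ n, ∃ t : Fin n → ℕ, (∀ i, t i ≤ m (i : ℕ)) ∧
        x ∈ closure (π '' cyl n (fun j => if h : j < n then t ⟨j, h⟩ else 0)) := by
      intro n
      have := mem_iInter.1 hx n
      rw [hKb] at this
      simpa using this
    choose t ht hxt using hex
    set σseq : ℕ → (ℕ → ℕ) := fun n j => if h : j < n then t n ⟨j, h⟩ else 0 with hσseq
    have hσK : ∀ n, σseq n ∈ K := by
      intro n j
      by_cases h : j < n
      · simpa [hσseq, h] using ht n ⟨j, h⟩
      · simp [hσseq, h]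
    obtain ⟨σ, hσin, φ, hφmono, hφtend⟩ := hKcompact.isSeqCompact hσK
    have hcoord : ∀ i, ∀ᶠ j in Filter.atTop, σseq (φ j) i = σ i := by
      intro i
      have h1 : Filter.Tendsto (fun j => σseq (φ j) i) Filter.atTop (nhds (σ i)) :=
        tendsto_pi_nhds.1 hφtend i
      exact h1.eventually_mem ((isOpen_discrete {σ i}).mem_nhds rfl)
    have hclos : ∀ i, x ∈ closure (π '' cyl i σ) := by
      intro i
      have hev1 : ∀ᶠ j in Filter.atTop, ∀ i' ∈ Iio i, σseq (φ j) i' = σ i' :=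
        (Filter.eventually_all_finite (finite_Iio i)).2 (fun i' _ => hcoord i')
      have hev2 : ∀ᶠ j in Filter.atTop, i ≤ φ j :=
        hφmono.tendsto_atTop.eventually_ge_atTop i
      obtain ⟨j, hj1, hj2⟩ := (hev1.and hev2).exists
      refine closure_mono (image_mono ?_) (hxt (φ j))
      intro τ hτ i' hi'
      have h1 := hτ i' (hi'.trans_le hj2)
      have h2 := hj1 i' (mem_Iio.2 hi')
      rw [h1]
      exact h2
    have hxeq : x = π σ := by
      by_contra hne
      have hr : 0 < dist x (π σ) := dist_pos.2 hne
      have hUopen : IsOpen (π ⁻¹' Metric.ball (π σ) (dist x (π σ) / 2)) :=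
        (Metric.isOpen_ball).preimage hπ
      have hσU : σ ∈ π ⁻¹' Metric.ball (π σ) (dist x (π σ) / 2) := by
        simp only [mem_preimage, Metric.mem_ball, dist_self]
        positivity
      obtain ⟨n, hn⟩ := cyl_nhds_basis hUopen hσU
      have : x ∈ closure (Metric.ball (π σ) (dist x (π σ) / 2)) :=
        closure_mono (by
          intro y hy
          obtain ⟨τ, hτ, rfl⟩ := hy
          exact hn hτ) (hclos n)
      have hle : dist x (π σ) ≤ dist x (π σ) / 2 :=
        (Metric.closure_ball_subset_closedBall this)
      linarith
    exact hxeq ▸ ⟨σ, hσin, rfl⟩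
  -- final assembly
  set B : ℕ → Set E := fun n => ⋂ j ∈ Iic n, Kb j with hB
  have hBanti : Antitone B := fun a b hab => biInter_subset_biInter_left (Iic_subset_Iic.2 hab)
  have hBmeas : ∀ n, NullMeasurableSet (B n) μ := by
    intro n
    exact (MeasurableSet.biInter (to_countable _)
      (fun j _ => (hKbclosed j).measurableSet)).nullMeasurableSet
  have hBsup : ∀ n, π '' D n ⊆ B n := by
    intro n
    refine subset_iInter₂ (fun j hj => ?_)
    exact (image_mono (hDanti j n hj)).trans (hKbsub j)
  have hBint : ⋂ n, B n = ⋂ n, Kb n := by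
    apply Subset.antisymm
    · intro x hx
      apply mem_iInter.2
      intro n
      exact mem_iInter₂.1 (mem_iInter.1 hx n) n self_mem_Iic
    · intro x hx
      exact mem_iInter.2 fun n => mem_iInter₂.2 fun j _ => mem_iInter.1 hx j
  have hμB : μ (⋂ n, B n) = ⨅ n, μ (B n) :=
    hBanti.measure_iInter hBmeas ⟨0, (measure_lt_top μ _).ne⟩
  calc μ (range π) ≤ ⨅ n, (μ (B n) + δ) :=
        le_iInf (fun n => (hinv' n).trans (add_le_add_left (measure_mono (hBsup n)) δ))
    _ = (⨅ n, μ (B n)) + δ := (ENNReal.iInf_add).symm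
    _ = μ (⋂ n, B n) + δ := by rw [hμB]
    _ ≤ μ (π '' K) + δ := by
        refine add_le_add_left (measure_mono ?_) δ
        rw [hBint]
        exact hCsub


theorem nullMeasurableSet_range
    {E : Type*} [TopologicalSpace E] [PolishSpace E] [MeasurableSpace E] [BorelSpace E]
    (π : (ℕ → ℕ) → E) (hπ : Continuous π)
    (μ : Measure E) [IsFiniteMeasure μ] : NullMeasurableSet (range π) μ := by
  letI := TopologicalSpace.upgradeIsCompletelyMetrizable E
  have hex : ∀ n : ℕ, ∃ K : Set (ℕ → ℕ), IsCompact K ∧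
      μ (range π) ≤ μ (π '' K) + ((n : ℝ≥0∞) + 1)⁻¹ :=
    fun n => exists_compact_image_approx π hπ μ
      (ENNReal.inv_pos.2 (by simp))
  choose K hKc hKle using hex
  set T := ⋃ n, π '' K n with hT
  have hTmeas : MeasurableSet T :=
    MeasurableSet.iUnion fun n => (((hKc n).image hπ).isClosed).measurableSet
  have hTsub : T ⊆ range π := iUnion_subset fun n => image_subset_range _ _
  have hle : μ (range π) ≤ μ T := by
    refine ENNReal.le_of_forall_pos_le_add (fun ε hε _ => ?_)
    obtain ⟨n, hn⟩ := ENNReal.exists_inv_nat_lt (a := (ε : ℝ≥0∞)) (by exact_mod_cast hε.ne')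
    refine (hKle n).trans (add_le_add (measure_mono (subset_iUnion (fun n => π '' K n) n)) ?_)
    refine le_trans (le_trans ?_ hn.le) le_rfl
    exact ENNReal.inv_le_inv.2 (by simp)
  have hTeq : μ T = μ (range π) := le_antisymm (measure_mono hTsub) hle
  have hnull : μ (range π \ T) = 0 := by
    have h1 : range π \ T ⊆ toMeasurable μ (range π) \ T :=
      diff_subset_diff_left (subset_toMeasurable μ _)
    refine measure_mono_null h1 ?_
    rw [measure_diff (hTsub.trans (subset_toMeasurable μ _)) hTmeas.nullMeasurableSet
      (measure_lt_top μ _).ne, measure_toMeasurable, hTeq, tsub_self]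
  have : range π = T ∪ (range π \ T) := (union_diff_cancel hTsub).symm
  rw [this]
  exact hTmeas.nullMeasurableSet.union (NullMeasurableSet.of_null hnull)

theorem nullMeasurableSet_proj
    {E F : Type*}
    [TopologicalSpace E] [PolishSpace E] [MeasurableSpace E] [BorelSpace E]
    [TopologicalSpace F] [PolishSpace F] [MeasurableSpace F] [BorelSpace F]
    (μ : Measure E) [IsFiniteMeasure μ]
    (B : Set (E × F)) (hB : MeasurableSet B) : NullMeasurableSet (Prod.fst '' B) μ := by
  rcases B.eq_empty_or_nonempty with rfl | hBne
  · simp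
  · obtain ⟨β, tβ, pβ, f, hfcont, hfrange⟩ :=
      analyticSet_iff_exists_polishSpace_range.1 hB.analyticSet
    haveI : Nonempty β := by
      rcases hBne with ⟨p, hp⟩
      rw [← hfrange] at hp
      obtain ⟨b, _⟩ := hp
      exact ⟨b⟩
    obtain ⟨j, hjcont, hjsurj⟩ := PolishSpace.exists_nat_nat_continuous_surjective β
    have hrange : range (Prod.fst ∘ f ∘ j) = Prod.fst '' B := by
      rw [range_comp, range_comp, hjsurj.range_eq, image_univ, hfrange]
    have := nullMeasurableSet_range (Prod.fst ∘ f ∘ j)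
      (continuous_fst.comp (hfcont.comp hjcont)) μ
    rwa [hrange] at this

theorem exists_ae_measurable_selection
    {E F : Type*}
    [TopologicalSpace E] [PolishSpace E] [MeasurableSpace E] [BorelSpace E]
    [TopologicalSpace F] [PolishSpace F] [MeasurableSpace F] [BorelSpace F]
    (μ : Measure E) [IsFiniteMeasure μ] [Nonempty F]
    (B : Set (E × F)) (hB : MeasurableSet B) (hproj : μ ((Prod.fst '' B)ᶜ) = 0) :
    ∃ Y : E → F, Measurable Y ∧ ∀ᵐ x ∂μ, (x, Y x) ∈ B := by
  classical
  letI := TopologicalSpace.upgradeIsCompletelyMetrizable E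
  by_cases hμ0 : μ univ = 0
  · refine ⟨fun _ => Classical.arbitrary F, measurable_const, ?_⟩
    rw [ae_iff]
    exact measure_mono_null (subset_univ _) hμ0
  rcases B.eq_empty_or_nonempty with rfl | hBne
  · exfalso
    apply hμ0
    simpa using hproj
  obtain ⟨β, tβ, pβ, f, hfcont, hfrange⟩ :=
    analyticSet_iff_exists_polishSpace_range.1 hB.analyticSet
  haveI : Nonempty β := by
    rcases hBne with ⟨p, hp⟩
    rw [← hfrange] at hp
    obtain ⟨b, _⟩ := hp
    exact ⟨b⟩
  obtain ⟨j, hjcont, hjsurj⟩ := PolishSpace.exists_nat_nat_continuous_surjective β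
  set h : (ℕ → ℕ) → E × F := f ∘ j with hh
  have hhcont : Continuous h := hfcont.comp hjcont
  have hhrange : range h = B := by rw [hh, range_comp, hjsurj.range_eq, image_univ, hfrange]
  set π : (ℕ → ℕ) → E := Prod.fst ∘ h with hπdef
  have hπcont : Continuous π := continuous_fst.comp hhcont
  have hπrange : range π = Prod.fst '' B := by rw [hπdef, range_comp, hhrange]
  -- increasing compacts with large image
  have hex : ∀ n : ℕ, ∃ K : Set (ℕ → ℕ), IsCompact K ∧
      μ (range π) ≤ μ (π '' K) + ((n : ℝ≥0∞) + 1)⁻¹ :=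
    fun n => exists_compact_image_approx π hπcont μ (ENNReal.inv_pos.2 (by simp))
  choose K hKc hKle using hex
  set K' : ℕ → Set (ℕ → ℕ) := fun n => ⋃ j ∈ Iic n, K j with hK'
  have hK'c : ∀ n, IsCompact (K' n) := fun n => (finite_Iic n).isCompact_biUnion (fun j _ => hKc j)
  have hK'mono : Monotone K' := fun a b hab => biUnion_subset_biUnion_left (Iic_subset_Iic.2 hab)
  set G : ℕ → Set E := fun n => π '' K' n with hG
  have hGmeas : ∀ n, MeasurableSet (G n) := fun n =>
    (((hK'c n).image hπcont).isClosed).measurableSet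
  have hGmono : Monotone G := fun a b hab => image_mono (hK'mono hab)
  have hGsub : ∀ n, G n ⊆ range π := fun n => image_subset_range _ _
  have hGle : ∀ n, μ (range π) ≤ μ (G n) + ((n : ℝ≥0∞) + 1)⁻¹ := by
    intro n
    refine (hKle n).trans (add_le_add (measure_mono (image_mono ?_)) le_rfl)
    exact subset_biUnion_of_mem self_mem_Iic
  -- selections on the compacts
  have hsel : ∀ n : ℕ, ∃ s : E → (ℕ → ℕ), Measurable s ∧
      ∀ x ∈ π '' K' n, s x ∈ K' n ∧ π (s x) = x :=
    fun n => exists_measurable_selection_on_compact π hπcont (K' n) (hK'c n)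
  choose s hsmeas hswork using hsel
  -- the selection
  set D := ⋃ n, G n with hD
  set Y : E → F := fun x =>
    if hx : ∃ n, x ∈ G n then Prod.snd (h (s (Nat.find hx) x)) else Classical.arbitrary F
    with hY
  have hYval : ∀ x (hx : ∃ n, x ∈ G n), Y x = Prod.snd (h (s (Nat.find hx) x)) :=
    fun x hx => dif_pos hx
  have hYval' : ∀ x, (¬ ∃ n, x ∈ G n) → Y x = Classical.arbitrary F :=
    fun x hx => dif_neg hx
  have hYmeas : Measurable Y := by
    intro S hS
    have : Y ⁻¹' S =
        (Dᶜ ∩ (if Classical.arbitrary F ∈ S then univ else ∅)) ∪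
          ⋃ n, ((G n \ ⋃ j ∈ Iio n, G j) ∩ (fun x => Prod.snd (h (s n x))) ⁻¹' S) := by
      ext x
      by_cases hx : ∃ n, x ∈ G n
      · set n₀ := Nat.find hx with hn₀
        have hxD : x ∈ D := mem_iUnion.2 hx
        have hxG : x ∈ G n₀ := Nat.find_spec hx
        have hxnot : ∀ j, j < n₀ → x ∉ G j := fun j hj => Nat.find_min hx hj
        simp only [mem_preimage, mem_union, mem_inter_iff, mem_compl_iff, hxD, not_true,
          false_and, false_or, mem_iUnion]
        constructor
        · intro hYS
          refine ⟨n₀, ⟨hxG, ?_⟩, ?_⟩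
          · simp only [mem_iUnion, mem_Iio, not_exists]
            intro j hj
            exact fun hmem => hxnot j hj hmem
          · rwa [hYval x hx] at hYS
        · rintro ⟨n, ⟨hxGn, hxn⟩, hS'⟩
          have hn : n = n₀ := by
            by_contra hne
            rcases Nat.lt_or_ge n n₀ with hlt | hge
            · exact hxnot n hlt hxGn
            · have : n₀ < n := lt_of_le_of_ne hge (Ne.symm hne)
              simp only [mem_iUnion, mem_Iio, not_exists] at hxn
              exact hxn n₀ this hxG
          rw [hYval x hx]
          rw [hn] at hS'
          exact hS'
      · have hxD : x ∉ D := by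
          rw [hD]
          simpa using hx
        simp only [mem_preimage, mem_union, mem_inter_iff, mem_compl_iff, hxD, not_false_iff,
          true_and, mem_iUnion]
        rw [hYval' x hx]
        constructor
        · intro hYS
          left
          simp [hYS]
        · rintro (hmem | ⟨n, ⟨hxGn, _⟩, _⟩)
          · by_cases harb : Classical.arbitrary F ∈ S
            · exact harb
            · simp [harb] at hmem
          · exact absurd ⟨n, hxGn⟩ hx
    rw [this]
    refine MeasurableSet.union ?_ (MeasurableSet.iUnion fun n => ?_)
    · refine (MeasurableSet.compl (MeasurableSet.iUnion hGmeas)).inter ?_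
      by_cases harb : Classical.arbitrary F ∈ S <;> simp [harb]
    · exact ((hGmeas n).diff (MeasurableSet.biUnion (to_countable _) (fun j _ => hGmeas j))).inter
        ((measurable_snd.comp (hhcont.measurable.comp (hsmeas n))) hS)
  refine ⟨Y, hYmeas, ?_⟩
  -- almost everywhere property
  have hDmeas : MeasurableSet D := MeasurableSet.iUnion hGmeas
  have hDsub : D ⊆ range π := iUnion_subset hGsub
  have hμD : μ (range π) ≤ μ D := by
    refine ENNReal.le_of_forall_pos_le_add (fun ε hε _ => ?_)
    obtain ⟨n, hn⟩ := ENNReal.exists_inv_nat_lt (a := (ε : ℝ≥0∞)) (by exact_mod_cast hε.ne')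
    refine (hGle n).trans (add_le_add (measure_mono (subset_iUnion G n)) ?_)
    exact le_trans (ENNReal.inv_le_inv.2 (by simp)) hn.le
  have hnull : μ Dᶜ = 0 := by
    have h1 : Dᶜ ⊆ (range π)ᶜ ∪ (toMeasurable μ (range π) \ D) := by
      intro x hx
      by_cases hxr : x ∈ range π
      · exact Or.inr ⟨subset_toMeasurable μ _ hxr, hx⟩
      · exact Or.inl hxr
    refine measure_mono_null h1 (measure_union_null ?_ ?_)
    · rw [hπrange]; exact hproj
    · rw [measure_diff (hDsub.trans (subset_toMeasurable μ _)) hDmeas.nullMeasurableSet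
        (measure_lt_top μ _).ne, measure_toMeasurable]
      exact tsub_eq_zero_of_le (hμD.trans (measure_mono (by exact fun x hx => hx)))
  rw [ae_iff]
  refine measure_mono_null (fun x hx => ?_) hnull
  simp only [mem_setOf_eq] at hx
  intro hxD
  apply hx
  obtain ⟨n, hn⟩ := mem_iUnion.1 hxD
  have hex' : ∃ n, x ∈ G n := ⟨n, hn⟩
  have hwork := hswork (Nat.find hex') x (Nat.find_spec hex')
  rw [hYval x hex']
  have hmem : h (s (Nat.find hex') x) ∈ B := by
    rw [← hhrange]
    exact mem_range_self _
  have hfst : (h (s (Nat.find hex') x)).1 = x := hwork.2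
  have heq : (x, Prod.snd (h (s (Nat.find hex') x))) = h (s (Nat.find hex') x) := by
    conv_rhs => rw [← Prod.mk.eta (p := h (s (Nat.find hex') x))]
    rw [hfst]
  exact heq ▸ hmem

end EpsOpt

/-- Measurable selection of `ε`-optimizers: for a Borel measurable
`f : E × F → ℝ ∪ {∞}` on a product of Polish spaces, a measurable set `A ⊆ E × F` with full
projection on `E`, and a Borel probability measure `μ` on `E`, the function
`g(x) = inf { f(x,y) : (x,y) ∈ A }` is measurable for the `μ`-completed σ-field, and for every
`ε > 0` there is a `μ`-completed-measurable selection `Y_ε` with `(x, Y_ε x) ∈ A` μ-a.e. and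
`f(x, Y_ε x) ≤ (g x + ε) 1_{g x > -∞} - (1/ε) 1_{g x = -∞}` μ-a.e. -/
theorem measurable_selection_eps_optimizer
    {E F : Type*}
    [TopologicalSpace E] [PolishSpace E] [MeasurableSpace E] [BorelSpace E]
    [TopologicalSpace F] [PolishSpace F] [MeasurableSpace F] [BorelSpace F]
    (μ : Measure E) [IsProbabilityMeasure μ]
    (f : E × F → EReal) (hf : Measurable f)
    -- f takes values in ℝ ∪ {∞}
    (hf_ne_bot : ∀ p, f p ≠ ⊥)
    (A : Set (E × F)) (hA : MeasurableSet A)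
    (hproj : ∀ x : E, ∃ y : F, (x, y) ∈ A)
    (g : E → EReal)
    (hg : ∀ x, g x = sInf {z : EReal | ∃ y : F, (x, y) ∈ A ∧ f (x, y) = z}) :
    NullMeasurable g μ ∧
      ∀ ε : ℝ, 0 < ε → ∃ Y : E → F, NullMeasurable Y μ ∧
        ∀ᵐ x ∂μ, (x, Y x) ∈ A ∧
          f (x, Y x) ≤ if g x = ⊥ then ((-(1 / ε) : ℝ) : EReal) else g x + (ε : EReal) := by
  classical
  -- E and F are nonempty
  have hEne : Nonempty E := by
    by_contra hE
    rw [not_nonempty_iff] at hE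
    have h1 : μ univ = 1 := measure_univ
    rw [Set.univ_eq_empty_iff.mpr hE, measure_empty] at h1
    exact zero_ne_one h1
  have hFne : Nonempty F := ⟨(hproj hEne.some).choose⟩
  -- Step 1 : null-measurability of g
  have hgmeas : NullMeasurable g μ := by
    refine measurable_of_Iio (α := EReal) (δ := NullMeasurableSpace E μ) (f := g) (fun c => ?_)
    have hset : g ⁻¹' Iio c = Prod.fst '' (A ∩ f ⁻¹' Iio c) := by
      ext x
      simp only [mem_preimage, mem_Iio, mem_image, mem_inter_iff]
      rw [hg x]
      rw [sInf_lt_iff]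
      constructor
      · rintro ⟨z, ⟨y, hyA, hyz⟩, hz⟩
        exact ⟨(x, y), ⟨hyA, by rwa [hyz]⟩, rfl⟩
      · rintro ⟨⟨x', y⟩, ⟨hyA, hylt⟩, rfl⟩
        exact ⟨f (x', y), ⟨y, hyA, rfl⟩, hylt⟩
    show NullMeasurableSet (g ⁻¹' Iio c) μ
    rw [hset]
    exact EpsOpt.nullMeasurableSet_proj μ _ (hA.inter (hf measurableSet_Iio))
  refine ⟨hgmeas, fun ε hε => ?_⟩
  -- a Borel version of g
  obtain ⟨g', hg'meas, hgg'⟩ := hgmeas.aemeasurable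
  -- the threshold function
  set τ : EReal → EReal := fun z => if z = ⊥ then ((-(1 / ε) : ℝ) : EReal) else z + (ε : EReal)
    with hτ
  have hτmeas : Measurable τ := by
    have hbotset : MeasurableSet {z : EReal | z = ⊥} := by
      simpa using measurableSet_singleton (⊥ : EReal)
    refine Measurable.ite hbotset measurable_const ?_
    have : Continuous (fun z : EReal => z + (ε : EReal)) := by
      rw [continuous_iff_continuousAt]
      intro z
      have h1 : ContinuousAt (fun p : EReal × EReal => p.1 + p.2) (z, (ε : EReal)) :=
        EReal.continuousAt_add (Or.inr (EReal.coe_ne_bot ε)) (Or.inr (EReal.coe_ne_top ε))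
      have h2 : ContinuousAt (fun z : EReal => (z, (ε : EReal))) z :=
        (continuous_id.prodMk continuous_const).continuousAt
      exact ContinuousAt.comp (f := fun z : EReal => (z, (ε : EReal))) (x := z) h1 h2
    exact this.measurable
  -- the constraint set
  set B : Set (E × F) := A ∩ {p | f p ≤ τ (g' p.1)} with hB
  have hBmeas : MeasurableSet B :=
    hA.inter (measurableSet_le hf ((hτmeas.comp hg'meas).comp measurable_fst))
  -- a.e. full projection
  have hfull : ∀ x, g' x = g x → x ∈ Prod.fst '' B := by
    intro x hx
    have hSne : {z : EReal | ∃ y : F, (x, y) ∈ A ∧ f (x, y) = z}.Nonempty := by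
      obtain ⟨y, hy⟩ := hproj x
      exact ⟨f (x, y), y, hy, rfl⟩
    by_cases hbot : g x = ⊥
    · -- pick a point with value < -(1/ε)
      have : sInf {z : EReal | ∃ y : F, (x, y) ∈ A ∧ f (x, y) = z} < ((-(1 / ε) : ℝ) : EReal) := by
        rw [← hg x, hbot]
        exact EReal.bot_lt_coe _
      obtain ⟨z, ⟨y, hyA, hyz⟩, hzlt⟩ := sInf_lt_iff.1 this
      refine ⟨(x, y), ⟨hyA, ?_⟩, rfl⟩
      show f (x, y) ≤ τ (g' x)
      rw [hτ]
      simp only [hx, hbot, if_pos]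
      rw [hyz]
      exact hzlt.le
    · by_cases htop : g x = ⊤
      · -- every point of the section has value ⊤
        obtain ⟨y, hy⟩ := hproj x
        refine ⟨(x, y), ⟨hy, ?_⟩, rfl⟩
        show f (x, y) ≤ τ (g' x)
        rw [hτ]
        simp only [hx, hbot, if_neg]
        rw [htop, EReal.top_add_of_ne_bot (EReal.coe_ne_bot ε)]
        exact le_top
      · -- g x is real
        obtain ⟨r, hr⟩ : ∃ r : ℝ, g x = (r : EReal) := ⟨(g x).toReal, (EReal.coe_toReal htop hbot).symm⟩
        have hstep : g x < g x + (ε : EReal) := by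
          rw [hr, ← EReal.coe_add]
          exact_mod_cast lt_add_of_pos_right r hε
        have hlt : sInf {z : EReal | ∃ y : F, (x, y) ∈ A ∧ f (x, y) = z}
            < g x + (ε : EReal) := by
          rw [← hg x]
          exact hstep
        obtain ⟨z, ⟨y, hyA, hyz⟩, hzlt⟩ := sInf_lt_iff.1 hlt
        refine ⟨(x, y), ⟨hyA, ?_⟩, rfl⟩
        show f (x, y) ≤ τ (g' x)
        rw [hτ]
        simp only [hx, hbot, if_neg]
        rw [hyz]
        exact hzlt.le
  -- projection of B is co-null
  have hnull2 : μ {x | ¬ g x = g' x} = 0 := by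
    have := ae_iff.1 hgg'
    exact this
  have hprojnull : μ ((Prod.fst '' B)ᶜ) = 0 := by
    refine measure_mono_null (fun x hx => ?_) hnull2
    intro hgx
    exact hx (hfull x hgx.symm)
  -- apply the selection theorem
  obtain ⟨Y, hYmeas, hYae⟩ := EpsOpt.exists_ae_measurable_selection μ B hBmeas hprojnull
  refine ⟨Y, hYmeas.nullMeasurable, ?_⟩
  filter_upwards [hYae, hgg'] with x hxB hxg
  refine ⟨hxB.1, ?_⟩
  have h2 : f (x, Y x) ≤ τ (g' x) := hxB.2
  rw [hτ, ← hxg] at h2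
  exact h2
end

section
/- Let L : [0,1] × Ω × U → ℝ⁺ satisfy the uniform time-continuity condition: Δ_t L(ε) := sup{ |L(s,x,u) - L(t,x,u)| / (1 + L(t,x,u)) : |t - s| ≤ ε, x ∈ Ω, u ∈ U } → 0 as ε → 0. Then for every ε < 1, every x ∈ Ω, and every measurable process η with values in ℝ^{d²+d}, the inequality ∫_0^1 L(s, x, η_s) ds ≥ (1/(1 + Δ_t L(ε))) ∫_0^{1-ε} L(s, x, (1/ε)∫_s^{s+ε} η_t dt) ds - Δ_t L(ε) holds, provided L(t, x, ·) is convex on the convex set U for each (t, x). -/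
open MeasureTheory Set intervalIntegral

/-- The barycenter of a probability measure supported on a convex set in a
finite-dimensional normed space lies in the set (no closedness needed). -/
lemma key_barycenter {E : Type*} [NormedAddCommGroup E] [NormedSpace ℝ E]
    [FiniteDimensional ℝ E] {α : Type*} [MeasurableSpace α] {μ : Measure α}
    [IsProbabilityMeasure μ] {ζ : α → E} (hζi : Integrable ζ μ) :
    ∀ (k : ℕ) (C : Set E), Convex ℝ C → Module.finrank ℝ (vectorSpan ℝ C) ≤ k →
      (∀ᵐ t ∂μ, ζ t ∈ C) → (∫ t, ζ t ∂μ) ∈ C := by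
  intro k
  induction k using Nat.strong_induction_on with
  | _ k ih =>
  intro C hC hrank hmem
  by_contra hb
  set b := ∫ t, ζ t ∂μ with hbdef
  have hbc : b ∈ closure C :=
    hC.closure.integral_mem isClosed_closure (hmem.mono fun t ht => subset_closure ht) hζi
  have hCne : C.Nonempty := by
    obtain ⟨t, ht⟩ := hmem.exists
    exact ⟨ζ t, ht⟩
  set V : Submodule ℝ E := vectorSpan ℝ C with hV
  have hVclosed : IsClosed (V : Set E) := Submodule.closed_of_finiteDimensional V
  have hsubV : ∀ u ∈ C, u - b ∈ V := by
    intro u hu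
    have h1 : u - b ∈ closure (V : Set E) := by
      refine map_mem_closure (f := fun z : E => u - z) (by fun_prop) hbc ?_
      intro w hw
      have := vsub_mem_vectorSpan ℝ hu hw
      simpa [vsub_eq_sub] using this
    rwa [hVclosed.closure_eq] at h1
  -- The translated set `T = C - b`, inside `V`.
  set T : Set E := (fun u => u - b) '' C with hT
  have hTconv : Convex ℝ T := by
    have h := hC.translate (-b)
    have himg : ((fun x => -b + x) '' C) = T := by
      ext z
      simp only [Set.mem_image, hT]
      constructor <;> rintro ⟨u, hu, h⟩ <;> exact ⟨u, hu, by rw [← h]; abel⟩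
    rwa [himg] at h
  have hTV : T ⊆ (V : Set E) := by rintro _ ⟨u, hu, rfl⟩; exact hsubV u hu
  have hT0 : (0 : E) ∉ T := by
    rintro ⟨u, hu, h0⟩
    rw [sub_eq_zero] at h0
    exact hb (h0 ▸ hu)
  -- Pull back to the subtype `V`.
  set D : Set V := ((↑) : V → E) ⁻¹' T with hD
  have hDconv : Convex ℝ D := hTconv.linear_preimage V.subtype
  have hDne : D.Nonempty := by
    obtain ⟨c, hc⟩ := hCne
    exact ⟨⟨c - b, hsubV c hc⟩, ⟨c, hc, rfl⟩⟩
  have hcoeD : ((↑) : V → E) '' D = T := by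
    ext z
    constructor
    · rintro ⟨w, hw, rfl⟩; exact hw
    · intro hz; exact ⟨⟨z, hTV hz⟩, hz, rfl⟩
  -- `D` spans all of `V`.
  have hDspan : vectorSpan ℝ D = (⊤ : Submodule ℝ V) := by
    apply Submodule.map_injective_of_injective (show Function.Injective V.subtype from
      Subtype.coe_injective)
    rw [Submodule.map_subtype_top]
    rw [vectorSpan_def, Submodule.map_span]
    have himg : V.subtype '' (D -ᵥ D) = C -ᵥ C := by
      ext z
      constructor
      · rintro ⟨w, hw, rfl⟩
        obtain ⟨p, hp, q, hq, rfl⟩ := hw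
        obtain ⟨u, hu, hup⟩ := hp
        obtain ⟨v, hv, hvq⟩ := hq
        refine ⟨u, hu, v, hv, ?_⟩
        have h1 : (V.subtype) (p -ᵥ q) = (p : E) - (q : E) := rfl
        rw [h1, ← hup, ← hvq]
        show u -ᵥ v = (u - b) - (v - b)
        rw [vsub_eq_sub]
        exact (sub_sub_sub_cancel_right u v b).symm
      · rintro ⟨u, hu, v, hv, rfl⟩
        refine ⟨(⟨u - b, hsubV u hu⟩ : V) -ᵥ ⟨v - b, hsubV v hv⟩, ?_, ?_⟩
        · exact Set.vsub_mem_vsub ⟨u, hu, rfl⟩ ⟨v, hv, rfl⟩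
        · show (u - b) - (v - b) = u -ᵥ v
          simp [vsub_eq_sub]
    rw [himg, ← vectorSpan_def, ← hV]
  have hintD : (interior D).Nonempty := by
    rw [hDconv.interior_nonempty_iff_affineSpan_eq_top,
      AffineSubspace.affineSpan_eq_top_iff_vectorSpan_eq_top_of_nonempty ℝ _ _ hDne]
    exact hDspan
  obtain ⟨y, hy⟩ := hintD
  have h0D : (0 : V) ∉ D := by
    intro h
    exact hT0 (by simpa [hD] using h)
  obtain ⟨φ, hφ⟩ := geometric_hahn_banach_open_point hDconv.interior isOpen_interior
    (fun h => h0D (interior_subset h))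
  have hφy : φ y < 0 := by simpa using hφ y hy
  have hφnonpos : ∀ v ∈ D, φ v ≤ 0 := by
    intro v hv
    by_contra hpos
    push_neg at hpos
    have hden : 0 < φ v + -(φ y) := by linarith
    have htIoc : φ v / (φ v + -(φ y)) ∈ Set.Ioc (0:ℝ) 1 := by
      constructor
      · positivity
      · rw [div_le_one hden]; linarith
    have hmem2 := hDconv.add_smul_sub_mem_interior hv hy htIoc
    have h2 := hφ _ hmem2
    rw [map_add, _root_.map_smul, map_sub, map_zero, smul_eq_mul] at h2
    have h3 : φ v + φ v / (φ v + -(φ y)) * (φ y - φ v) = 0 := by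
      field_simp
      ring
    linarith
  -- Extend `φ` to a functional `ℓ` on `E`.
  obtain ⟨W, hW⟩ := Submodule.exists_isCompl V
  set π : E →ₗ[ℝ] V := V.linearProjOfIsCompl W hW with hπ
  set ℓ : E →L[ℝ] ℝ :=
    LinearMap.toContinuousLinearMap ((φ : V →ₗ[ℝ] ℝ).comp π) with hℓ
  have hℓapply : ∀ (z : E) (hz : z ∈ V), ℓ z = φ ⟨z, hz⟩ := by
    intro z hz
    have h0 : ℓ z = ((φ : V →ₗ[ℝ] ℝ).comp π) z := by
      rw [hℓ, LinearMap.coe_toContinuousLinearMap']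
    have h1 : π z = ⟨z, hz⟩ := Submodule.linearProjOfIsCompl_apply_left hW ⟨z, hz⟩
    rw [h0, LinearMap.comp_apply, h1]
    rfl
  have hdiff : ∀ u, ∀ hu : u ∈ C, ℓ u - ℓ b = φ ⟨u - b, hsubV u hu⟩ := by
    intro u hu
    rw [← map_sub]
    exact (hℓapply (u - b) (hsubV u hu))
  have hle : ∀ u ∈ C, ℓ u ≤ ℓ b := by
    intro u hu
    have h1 := hφnonpos ⟨u - b, hsubV u hu⟩ (show ((⟨u - b, _⟩ : V) : E) ∈ T from ⟨u, hu, rfl⟩)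
    have h2 := hdiff u hu
    linarith
  -- a.e. equality of `ℓ ∘ ζ` with `ℓ b`
  have hcomp : Integrable (fun t => ℓ (ζ t)) μ := ℓ.integrable_comp hζi
  have hintℓ : ∫ t, ℓ (ζ t) ∂μ = ℓ b := ℓ.integral_comp_comm hζi
  have hle_ae : ∀ᵐ t ∂μ, ℓ (ζ t) ≤ ℓ b := hmem.mono fun t ht => hle _ ht
  have heq_ae : ∀ᵐ t ∂μ, ℓ (ζ t) = ℓ b := by
    have hnn : 0 ≤ᵐ[μ] fun t => ℓ b - ℓ (ζ t) :=
      hle_ae.mono fun t ht => sub_nonneg.2 ht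
    have hi : Integrable (fun t => ℓ b - ℓ (ζ t)) μ := (integrable_const _).sub hcomp
    have hz : ∫ t, (ℓ b - ℓ (ζ t)) ∂μ = 0 := by
      rw [MeasureTheory.integral_sub (integrable_const _) hcomp, hintℓ,
        MeasureTheory.integral_const]
      simp
    have h0 := (integral_eq_zero_iff_of_nonneg_ae hnn hi).mp hz
    filter_upwards [h0] with t ht
    have : ℓ b - ℓ (ζ t) = 0 := ht
    linarith
  -- the smaller convex set
  set C' : Set E := {u ∈ C | ℓ u = ℓ b} with hC'
  have hC'conv : Convex ℝ C' := by
    intro u hu v hv a c ha hc hac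
    refine ⟨hC hu.1 hv.1 ha hc hac, ?_⟩
    rw [map_add, _root_.map_smul, _root_.map_smul, smul_eq_mul, smul_eq_mul, hu.2, hv.2,
      ← add_mul, hac, one_mul]
  have hmem' : ∀ᵐ t ∂μ, ζ t ∈ C' := by
    filter_upwards [hmem, heq_ae] with t h1 h2
    exact ⟨h1, h2⟩
  -- rank decreases strictly
  have hker : vectorSpan ℝ C' ≤ LinearMap.ker (ℓ : E →ₗ[ℝ] ℝ) := by
    rw [vectorSpan_def]
    rw [Submodule.span_le]
    rintro z ⟨u, hu, v, hv, rfl⟩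
    rw [SetLike.mem_coe, LinearMap.mem_ker]
    show ℓ (u -ᵥ v) = 0
    rw [vsub_eq_sub, map_sub, hu.2, hv.2, sub_self]
  have hyD : y ∈ D := interior_subset hy
  obtain ⟨u₀, hu₀C, hu₀⟩ := hyD
  have hstrictu₀ : ℓ u₀ < ℓ b := by
    have h2 := hdiff u₀ hu₀C
    have h3 : φ (⟨u₀ - b, hsubV u₀ hu₀C⟩ : V) = φ y := by
      congr 1
      exact Subtype.ext hu₀
    rw [h3] at h2
    linarith
  have hnotle : ¬ (V ≤ LinearMap.ker (ℓ : E →ₗ[ℝ] ℝ)) := by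
    intro hle'
    -- find w ∈ C with ℓ w > ℓ u₀ near b
    have hopen : IsOpen {z : E | ℓ u₀ < ℓ z} := isOpen_lt continuous_const ℓ.continuous
    obtain ⟨w, hw1, hw2⟩ := _root_.mem_closure_iff.mp hbc _ hopen hstrictu₀
    have hwV : w - u₀ ∈ V := by
      have := vsub_mem_vectorSpan ℝ hw2 hu₀C
      simpa [vsub_eq_sub] using this
    have := hle' hwV
    rw [LinearMap.mem_ker] at this
    have hz : ℓ (w - u₀) = 0 := this
    rw [map_sub] at hz
    have : ℓ u₀ < ℓ w := hw1
    linarith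
  have hC'lt : vectorSpan ℝ C' < V := by
    refine lt_of_le_of_ne (vectorSpan_mono ℝ (Set.sep_subset _ _)) ?_
    intro heq
    exact hnotle (heq ▸ hker)
  have hfr : Module.finrank ℝ (vectorSpan ℝ C') < k :=
    lt_of_lt_of_le (Submodule.finrank_lt_finrank_of_lt hC'lt) hrank
  exact hb (Set.sep_subset _ _ (ih _ hfr C' hC'conv le_rfl hmem'))

/-- Jensen's inequality for a convex function on a convex subset of a finite-dimensional
space, with no continuity hypothesis. -/
lemma key_jensen {n : ℕ} {U : Set (Fin n → ℝ)}
    {f : (Fin n → ℝ) → ℝ} (hf : ConvexOn ℝ U f)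
    {α : Type*} [MeasurableSpace α] {μ : Measure α} [IsProbabilityMeasure μ]
    {η : α → Fin n → ℝ} {g : α → ℝ} (hηi : Integrable η μ) (hgi : Integrable g μ)
    (hmem : ∀ᵐ t ∂μ, η t ∈ U) (hfg : ∀ᵐ t ∂μ, f (η t) ≤ g t) :
    f (∫ t, η t ∂μ) ≤ ∫ t, g t ∂μ := by
  have hepi : Convex ℝ {p : (Fin n → ℝ) × ℝ | p.1 ∈ U ∧ f p.1 ≤ p.2} := hf.convex_epigraph
  have hζi : Integrable (fun t => (η t, g t)) μ := hηi.prodMk hgi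
  have hmem' : ∀ᵐ t ∂μ, (η t, g t) ∈ {p : (Fin n → ℝ) × ℝ | p.1 ∈ U ∧ f p.1 ≤ p.2} := by
    filter_upwards [hmem, hfg] with t h1 h2
    exact ⟨h1, h2⟩
  have hres := key_barycenter hζi (Module.finrank ℝ
      (vectorSpan ℝ {p : (Fin n → ℝ) × ℝ | p.1 ∈ U ∧ f p.1 ≤ p.2})) _ hepi le_rfl hmem'
  rw [integral_pair hηi hgi] at hres
  exact hres.2

/-- The key inequality (3.17)-type estimate: if `L` is nonnegative, convex in the control
variable `u ∈ U`, and has uniform time-modulus of continuity `Δ_t L`, then for every `ε < 1`,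
every path `x` and every control process `η` with values in `U`,
`∫_0^1 L(s,x,η_s) ds ≥ (1/(1+Δ_t L(ε))) ∫_0^{1-ε} L(s,x,(1/ε)∫_s^{s+ε} η_t dt) ds - Δ_t L(ε)`. -/
theorem time_average_jensen_inequality
    {Ωs : Type*} (d : ℕ)
    (U : Set (Fin (d ^ 2 + d) → ℝ)) (hUconv : Convex ℝ U) (hUclosed : IsClosed U)
    (L : ℝ → Ωs → (Fin (d ^ 2 + d) → ℝ) → ℝ)
    (hLnonneg : ∀ t x u, 0 ≤ L t x u)
    (hLconv : ∀ t x, ConvexOn ℝ U (L t x))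
    -- `Δ` is the uniform time-modulus of continuity `Δ_t L`:
    (Δ : ℝ → ℝ) (hΔnonneg : ∀ ε, 0 ≤ Δ ε)
    (hΔ : ∀ ε : ℝ, 0 < ε → ∀ s t : ℝ, |t - s| ≤ ε → ∀ (x : Ωs) (u : _), u ∈ U →
      |L s x u - L t x u| ≤ Δ ε * (1 + L t x u))
    (hΔ0 : Filter.Tendsto Δ (nhdsWithin 0 (Set.Ioi 0)) (nhds 0))
    (ε : ℝ) (hε : 0 < ε) (hε1 : ε < 1) (x : Ωs)
    (η : ℝ → (Fin (d ^ 2 + d) → ℝ)) (hηmeas : Measurable η)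
    (hηU : ∀ t ∈ Set.Icc (0:ℝ) 1, η t ∈ U)
    (hηint : IntegrableOn η (Set.Icc 0 1) volume)
    (hint1 : IntegrableOn (fun s => L s x (η s)) (Set.Icc 0 1) volume)
    (hint2 : IntegrableOn (fun s => L s x ((1 / ε) • ∫ t in s..(s + ε), η t))
      (Set.Icc 0 (1 - ε)) volume) :
    (∫ s in (0:ℝ)..1, L s x (η s)) ≥
      (1 / (1 + Δ ε)) * (∫ s in (0:ℝ)..(1 - ε), L s x ((1 / ε) • ∫ t in s..(s + ε), η t))
        - Δ ε := by
  set K := Δ ε with hK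
  have hK0 : 0 ≤ K := hΔnonneg ε
  set f : ℝ → ℝ := fun t => L t x (η t) with hf
  have hfnn : ∀ t, 0 ≤ f t := fun t => hLnonneg t x (η t)
  -- interval integrability of f on subintervals of [0,1]
  have hfii : ∀ a b : ℝ, a ∈ Icc (0:ℝ) 1 → b ∈ Icc (0:ℝ) 1 →
      IntervalIntegrable f volume a b := by
    intro a b ha hb
    apply IntegrableOn.intervalIntegrable
    apply hint1.mono_set
    rw [uIcc]
    exact Icc_subset_Icc (le_min ha.1 hb.1) (max_le ha.2 hb.2)
  set F : ℝ → ℝ := fun r => ∫ t in (0:ℝ)..r, f t with hF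
  have hFcont : ContinuousOn F (Icc (0:ℝ) 1) := by
    have h := continuousOn_primitive_interval (a := (0:ℝ)) (b := 1) (μ := volume) (f := f) ?_
    · rwa [uIcc_of_le (by norm_num : (0:ℝ) ≤ 1)] at h
    · rw [uIcc_of_le (by norm_num : (0:ℝ) ≤ 1)]
      exact hint1
  have hFsplit : ∀ a ∈ Icc (0:ℝ) 1, ∀ b ∈ Icc (0:ℝ) 1, a ≤ b →
      (∫ t in a..b, f t) = F b - F a := by
    intro a ha b hb _
    rw [hF]
    have := integral_add_adjacent_intervals (hfii 0 a ⟨le_rfl, by norm_num⟩ ha)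
      (hfii a b ha hb)
    simp only []
    linarith [this]
  have hFnn : ∀ r ∈ Icc (0:ℝ) 1, 0 ≤ F r := by
    intro r hr
    exact intervalIntegral.integral_nonneg hr.1 fun t _ => hfnn t
  have hFle : ∀ r ∈ Icc (0:ℝ) 1, F r ≤ F 1 := by
    intro r hr
    have h := hFsplit r hr 1 ⟨by norm_num, le_rfl⟩ hr.2
    have h2 : 0 ≤ ∫ t in r..1, f t := intervalIntegral.integral_nonneg hr.2 fun t _ => hfnn t
    linarith
  -- KEY pointwise estimate via Jensen
  have key : ∀ s ∈ Icc (0:ℝ) (1 - ε),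
      L s x ((1 / ε) • ∫ t in s..(s + ε), η t) ≤
        (1/ε) * (1+K) * (F (s+ε) - F s) + K := by
    intro s hs
    have hs0 : 0 ≤ s := hs.1
    have hs1 : s + ε ≤ 1 := by linarith [hs.2]
    have hsub : Ioc s (s + ε) ⊆ Icc (0:ℝ) 1 := fun t ht => ⟨by linarith [ht.1], by linarith [ht.2]⟩
    set ν := volume.restrict (Ioc s (s + ε)) with hν
    have hνuniv : ν Set.univ = ENNReal.ofReal ε := by
      rw [hν, Measure.restrict_apply_univ, Real.volume_Ioc]
      congr 1
      ring
    haveI : IsFiniteMeasure ν := ⟨by rw [hνuniv]; exact ENNReal.ofReal_lt_top⟩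
    set c : ENNReal := ENNReal.ofReal (1/ε) with hc
    set P := c • ν with hP
    haveI : IsProbabilityMeasure P := by
      constructor
      rw [hP, Measure.smul_apply, hνuniv, smul_eq_mul, hc,
        ← ENNReal.ofReal_mul (by positivity)]
      rw [one_div, inv_mul_cancel₀ (ne_of_gt hε)]
      exact ENNReal.ofReal_one
    have hctop : c ≠ ⊤ := ENNReal.ofReal_ne_top
    have hctr : c.toReal = 1/ε := ENNReal.toReal_ofReal (by positivity)
    have hη_ν : Integrable η ν := hηint.mono_set hsub
    have hf_ν : Integrable f ν := hint1.mono_set hsub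
    have hg_ν : Integrable (fun t => (1+K) * f t + K) ν :=
      (hf_ν.const_mul _).add (integrable_const _)
    have hη_P : Integrable η P := hη_ν.smul_measure hctop
    have hg_P : Integrable (fun t => (1+K) * f t + K) P := hg_ν.smul_measure hctop
    have hmemν : ∀ᵐ t ∂ν, η t ∈ U := by
      filter_upwards [ae_restrict_mem measurableSet_Ioc] with t ht
      exact hηU t (hsub ht)
    have hmemP : ∀ᵐ t ∂P, η t ∈ U := Measure.ae_smul_measure hmemν c
    have hfgν : ∀ᵐ t ∂ν, L s x (η t) ≤ (1+K) * f t + K := by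
      filter_upwards [ae_restrict_mem measurableSet_Ioc] with t ht
      have htU : η t ∈ U := hηU t (hsub ht)
      have habs := hΔ ε hε s t
        (by rw [abs_of_nonneg (by linarith [ht.1])]; linarith [ht.2]) x (η t) htU
      have h1 := (abs_le.mp habs).2
      have h2 : K * (1 + L t x (η t)) = K + K * L t x (η t) := by ring
      have h3 : f t = L t x (η t) := rfl
      rw [h3]
      linarith
    have hfgP : ∀ᵐ t ∂P, L s x (η t) ≤ (1+K) * f t + K := Measure.ae_smul_measure hfgν c
    have hjen := key_jensen (hLconv s x) hη_P hg_P hmemP hfgP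
    have h1 : ∫ t, η t ∂P = (1 / ε) • ∫ t in s..(s + ε), η t := by
      rw [hP, MeasureTheory.integral_smul_measure, hctr, intervalIntegral.integral_of_le (by linarith)]
    have h2 : ∫ t, ((1+K) * f t + K) ∂P = (1/ε) * ((1+K) * (∫ t in s..(s+ε), f t) + K * ε) := by
      rw [hP, MeasureTheory.integral_smul_measure, hctr, smul_eq_mul]
      congr 1
      rw [MeasureTheory.integral_add (hf_ν.const_mul _) (integrable_const _),
        MeasureTheory.integral_const, MeasureTheory.integral_const_mul, measureReal_def, hνuniv]
      rw [intervalIntegral.integral_of_le (by linarith : s ≤ s + ε)]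
      rw [ENNReal.toReal_ofReal hε.le, smul_eq_mul]
      ring
    rw [h1, h2] at hjen
    have h4 := hFsplit s ⟨hs0, by linarith⟩ (s+ε) ⟨by linarith, hs1⟩ (by linarith)
    rw [h4] at hjen
    have hε' : ε ≠ 0 := ne_of_gt hε
    calc L s x ((1 / ε) • ∫ t in s..(s + ε), η t)
        ≤ (1/ε) * ((1+K) * (F (s+ε) - F s) + K * ε) := hjen
      _ = (1/ε) * (1+K) * (F (s+ε) - F s) + K := by field_simp
  -- integrate the key estimate over [0, 1-ε]
  have h1ε : (0:ℝ) ≤ 1 - ε := by linarith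
  have hGii : IntervalIntegrable (fun s => L s x ((1 / ε) • ∫ t in s..(s + ε), η t))
      volume 0 (1-ε) := by
    apply IntegrableOn.intervalIntegrable
    rwa [uIcc_of_le h1ε]
  have hcont2 : ContinuousOn (fun s => (1/ε) * (1+K) * (F (s+ε) - F s) + K) (Icc 0 (1-ε)) := by
    apply ContinuousOn.add ?_ continuousOn_const
    apply ContinuousOn.mul continuousOn_const
    apply ContinuousOn.sub
    · have hc : ContinuousOn (fun s : ℝ => F (s + ε)) (Icc 0 (1-ε)) := by
        apply ContinuousOn.comp hFcont (Continuous.continuousOn (by fun_prop))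
        intro u hu
        simp only [Set.mem_Icc] at hu ⊢
        constructor <;> linarith
      exact hc
    · exact hFcont.mono (Icc_subset_Icc le_rfl (by linarith))
  have hhii : IntervalIntegrable (fun s => (1/ε) * (1+K) * (F (s+ε) - F s) + K)
      volume 0 (1-ε) := by
    apply ContinuousOn.intervalIntegrable
    rwa [uIcc_of_le h1ε]
  have hmono := intervalIntegral.integral_mono_on h1ε hGii hhii key
  -- compute the right-hand side integral
  have hFii : ∀ a b : ℝ, a ∈ Icc (0:ℝ) 1 → b ∈ Icc (0:ℝ) 1 → IntervalIntegrable F volume a b := by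
    intro a b ha hb
    apply ContinuousOn.intervalIntegrable
    apply hFcont.mono
    rw [uIcc]
    exact Icc_subset_Icc (le_min ha.1 hb.1) (max_le ha.2 hb.2)
  have hshiftii : IntervalIntegrable (fun s => F (s+ε)) volume 0 (1-ε) := by
    apply ContinuousOn.intervalIntegrable
    rw [uIcc_of_le h1ε]
    apply ContinuousOn.comp hFcont (Continuous.continuousOn (by fun_prop))
    intro u hu
    simp only [Set.mem_Icc] at hu ⊢
    constructor <;> linarith
  have hFii2 : IntervalIntegrable F volume 0 (1-ε) :=
    hFii 0 (1-ε) ⟨le_rfl, by norm_num⟩ ⟨h1ε, by linarith⟩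
  have hrhs : (∫ s in (0:ℝ)..(1-ε), ((1/ε) * (1+K) * (F (s+ε) - F s) + K))
      = (1/ε) * (1+K) * ((∫ s in (0:ℝ)..(1-ε), F (s+ε)) - ∫ s in (0:ℝ)..(1-ε), F s)
        + K * (1-ε) := by
    rw [intervalIntegral.integral_add ((hshiftii.sub hFii2).const_mul _)
      intervalIntegrable_const]
    rw [intervalIntegral.integral_const_mul, intervalIntegral.integral_sub hshiftii hFii2,
      intervalIntegral.integral_const]
    simp [smul_eq_mul]
    ring
  have hshift : (∫ s in (0:ℝ)..(1-ε), F (s+ε)) = ∫ u in ε..1, F u := by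
    have := intervalIntegral.integral_comp_add_right (a := (0:ℝ)) (b := 1-ε) (fun u => F u) ε
    rw [this]
    norm_num
  have heq1 : (∫ u in (0:ℝ)..ε, F u) + (∫ u in ε..1, F u) = ∫ u in (0:ℝ)..1, F u :=
    integral_add_adjacent_intervals (hFii 0 ε ⟨le_rfl, by norm_num⟩ ⟨hε.le, hε1.le⟩)
      (hFii ε 1 ⟨hε.le, hε1.le⟩ ⟨by norm_num, le_rfl⟩)
  have heq2 : (∫ u in (0:ℝ)..(1-ε), F u) + (∫ u in (1-ε)..1, F u) = ∫ u in (0:ℝ)..1, F u :=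
    integral_add_adjacent_intervals hFii2 (hFii (1-ε) 1 ⟨h1ε, by linarith⟩ ⟨by norm_num, le_rfl⟩)
  have hb1 : (∫ u in (1-ε)..1, F u) ≤ ε * F 1 := by
    have h := intervalIntegral.integral_mono_on (by linarith : 1 - ε ≤ 1)
      (hFii (1-ε) 1 ⟨h1ε, by linarith⟩ ⟨by norm_num, le_rfl⟩) intervalIntegrable_const
      (fun u hu => hFle u ⟨by linarith [hu.1], hu.2⟩)
    rwa [intervalIntegral.integral_const, smul_eq_mul, sub_sub_cancel] at h
  have hb2 : 0 ≤ ∫ u in (0:ℝ)..ε, F u :=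
    intervalIntegral.integral_nonneg hε.le fun u hu => hFnn u ⟨hu.1, by linarith [hu.2]⟩
  -- put everything together
  have hchain : (∫ s in (0:ℝ)..(1 - ε), L s x ((1 / ε) • ∫ t in s..(s + ε), η t))
      ≤ (1+K) * F 1 + K * (1-ε) := by
    have hdiff : (∫ s in (0:ℝ)..(1-ε), F (s+ε)) - (∫ s in (0:ℝ)..(1-ε), F s)
        = (∫ u in (1-ε)..1, F u) - ∫ u in (0:ℝ)..ε, F u := by
      rw [hshift]; linarith
    have hbound : (∫ s in (0:ℝ)..(1-ε), F (s+ε)) - (∫ s in (0:ℝ)..(1-ε), F s) ≤ ε * F 1 := by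
      rw [hdiff]; linarith
    have ha : 0 ≤ (1/ε) * (1+K) := by positivity
    have := mul_le_mul_of_nonneg_left hbound ha
    have hεne : ε ≠ 0 := ne_of_gt hε
    have hfin : (1/ε) * (1+K) * (ε * F 1) = (1+K) * F 1 := by field_simp
    calc (∫ s in (0:ℝ)..(1 - ε), L s x ((1 / ε) • ∫ t in s..(s + ε), η t))
        ≤ (1/ε) * (1+K) * ((∫ s in (0:ℝ)..(1-ε), F (s+ε)) - ∫ s in (0:ℝ)..(1-ε), F s)
          + K * (1-ε) := by rw [← hrhs]; exact hmono
      _ ≤ (1/ε) * (1+K) * (ε * F 1) + K * (1-ε) := by linarith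
      _ = (1+K) * F 1 + K * (1-ε) := by rw [hfin]
  -- final algebra
  have hgoal : F 1 ≥ (1 / (1 + K)) *
      (∫ s in (0:ℝ)..(1 - ε), L s x ((1 / ε) • ∫ t in s..(s + ε), η t)) - K := by
    set A := ∫ s in (0:ℝ)..(1 - ε), L s x ((1 / ε) • ∫ t in s..(s + ε), η t) with hA
    rw [ge_iff_le, sub_le_iff_le_add, one_div_mul_eq_div,
      div_le_iff₀ (by linarith : (0:ℝ) < 1 + K)]
    nlinarith [hchain, mul_nonneg hK0 hK0, mul_nonneg hK0 hε.le]
  exact hgoal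
end
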